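/- If Y is an infinite countably compact subspace of ω*, then Y contains a subspace homeomorphic to ω ∪ {p} (as a subspace of β(ω)) for some p ∈ ω*. -/

import Mathlib

open Set Topology Filter

open Classical in
noncomputable def chiFun (A : Set ℕ) : ℕ → Bool := fun n => decide (n ∈ A)

lemma continuous_chiFun (A : Set ℕ) : Continuous (chiFun A) := continuous_of_discreteTopology

noncomputable def gExt (A : Set ℕ) : StoneCech ℕ → Bool := stoneCechExtend (continuous_chiFun A)

lemma gExt_unit (A : Set ℕ) (n : ℕ) : gExt A (stoneCechUnit n) = chiFun A n :=
  congrFun (stoneCechExtend_extends (continuous_chiFun A)) n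

lemma chiFun_eq_true {A : Set ℕ} {n : ℕ} : chiFun A n = true ↔ n ∈ A := by
  simp [chiFun]

/-- The clopen set of `βℕ` determined by `A ⊆ ℕ`. -/
def hatSet (A : Set ℕ) : Set (StoneCech ℕ) := closure (stoneCechUnit '' A)

lemma hatSet_eq (A : Set ℕ) : hatSet A = gExt A ⁻¹' {true} := by
  apply subset_antisymm
  · apply closure_minimal
    · rintro _ ⟨n, hn, rfl⟩
      simp [gExt_unit, chiFun_eq_true.mpr hn]
    · exact (isClosed_singleton).preimage (continuous_stoneCechExtend _)
  · intro x hx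
    have hopen : IsOpen (gExt A ⁻¹' {true}) :=
      (isOpen_discrete _).preimage (continuous_stoneCechExtend _)
    have hsub := Dense.open_subset_closure_inter denseRange_stoneCechUnit hopen
    refine closure_mono ?_ (hsub hx)
    rintro _ ⟨hy, n, rfl⟩
    have : gExt A (stoneCechUnit n) = true := hy
    rw [gExt_unit] at this
    exact ⟨n, chiFun_eq_true.mp this, rfl⟩

lemma isClopen_hatSet (A : Set ℕ) : IsClopen (hatSet A) := by
  rw [hatSet_eq]
  exact ⟨(isClosed_singleton).preimage (continuous_stoneCechExtend _),
    (isOpen_discrete _).preimage (continuous_stoneCechExtend _)⟩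

lemma hatSet_compl (A : Set ℕ) : hatSet Aᶜ = (hatSet A)ᶜ := by
  have hg : gExt Aᶜ = fun x => !(gExt A x) := by
    apply stoneCech_hom_ext (continuous_stoneCechExtend _)
      (show Continuous (Bool.not ∘ gExt A) from
        Continuous.comp continuous_of_discreteTopology (continuous_stoneCechExtend _))
    funext n
    show gExt Aᶜ (stoneCechUnit n) = !(gExt A (stoneCechUnit n))
    rw [gExt_unit, gExt_unit]
    by_cases h : n ∈ A <;> simp [chiFun, h]
  ext x
  rw [hatSet_eq, hatSet_eq, hg]
  simp only [mem_preimage, mem_singleton_iff, mem_compl_iff]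
  cases h : gExt A x <;> simp

lemma hatSet_union (A B : Set ℕ) : hatSet (A ∪ B) = hatSet A ∪ hatSet B := by
  simp [hatSet, image_union, closure_union]

lemma hatSet_mono {A B : Set ℕ} (h : A ⊆ B) : hatSet A ⊆ hatSet B :=
  closure_mono (image_mono h)

lemma hatSet_inter (A B : Set ℕ) : hatSet (A ∩ B) = hatSet A ∩ hatSet B := by
  have h1 : A ∩ B = (Aᶜ ∪ Bᶜ)ᶜ := by simp [compl_union]
  rw [h1, hatSet_compl, hatSet_union, hatSet_compl, hatSet_compl, compl_union, compl_compl,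
    compl_compl]

lemma hatSet_univ : hatSet (univ : Set ℕ) = univ := by
  rw [hatSet, image_univ]
  exact denseRange_stoneCechUnit.closure_range

lemma hatSet_empty : hatSet (∅ : Set ℕ) = ∅ := by simp [hatSet]

lemma mem_hatSet_unit {A : Set ℕ} {n : ℕ} : stoneCechUnit n ∈ hatSet A ↔ n ∈ A := by
  constructor
  · intro h
    by_contra hn
    have h2 : stoneCechUnit n ∈ hatSet Aᶜ := subset_closure ⟨n, hn, rfl⟩
    rw [hatSet_compl] at h2
    exact h2 h
  · intro h
    exact subset_closure ⟨n, h, rfl⟩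

lemma stoneCechUnit_nat_injective : Function.Injective (stoneCechUnit : ℕ → StoneCech ℕ) := by
  intro a b h
  have := eq_if_stoneCechUnit_eq (f := chiFun {a}) (continuous_chiFun _) h
  simp [chiFun] at this
  exact this.symm

lemma hatSet_singleton (n : ℕ) : hatSet {n} = {stoneCechUnit n} := by
  rw [hatSet, image_singleton, closure_singleton]

/-- Two distinct points of `βℕ` are separated by a hat set. -/
lemma hat_separation {u v : StoneCech ℕ} (huv : u ≠ v) :
    ∃ S : Set ℕ, u ∈ hatSet S ∧ v ∈ (hatSet S)ᶜ := by
  obtain ⟨U, V, hU, hV, huU, hvV, hUV⟩ := t2_separation huv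
  refine ⟨{n | stoneCechUnit n ∈ U}, ?_, ?_⟩
  · have := Dense.open_subset_closure_inter denseRange_stoneCechUnit hU huU
    refine closure_mono ?_ this
    rintro _ ⟨hy, n, rfl⟩
    exact ⟨n, hy, rfl⟩
  · intro hv
    have hsub : hatSet {n | stoneCechUnit n ∈ U} ⊆ closure U := by
      apply closure_mono
      rintro _ ⟨n, hn, rfl⟩
      exact hn
    have := mem_closure_iff.mp (hsub hv) V hV hvV
    obtain ⟨z, hzV, hzU⟩ := this
    exact Set.disjoint_left.mp hUV hzU hzV

/-- The Stone–Čech remainder `ω* = β(ω) \ ω`. -/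
def omegaStar : Set (StoneCech ℕ) := (Set.range (stoneCechUnit : ℕ → StoneCech ℕ))ᶜ

/-- The subspace `ω ∪ {p}` of `β(ω)`. -/
def omegaP (p : StoneCech ℕ) : Set (StoneCech ℕ) :=
  Set.range stoneCechUnit ∪ {p}

/-- A space is countably compact if every countable open cover has a finite subcover. -/
def CountablyCompact (Y : Type*) [TopologicalSpace Y] : Prop :=
  ∀ U : ℕ → Set Y, (∀ n, IsOpen (U n)) → (⋃ n, U n) = Set.univ →
    ∃ t : Finset ℕ, (⋃ n ∈ t, U n) = Set.univ

/-- Every infinite countably compact subspace `Y` of `ω*` contains a copy of `ω ∪ {p}`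
for some `p ∈ ω*`. -/
theorem countably_compact_contains_omega_union_p (Y : Set (StoneCech ℕ))
    (hYsub : Y ⊆ omegaStar) (hYinf : Y.Infinite) (hcc : CountablyCompact ↥Y) :
    ∃ p ∈ omegaStar, ∃ s : Set (StoneCech ℕ), s ⊆ Y ∧ Nonempty (↥(omegaP p) ≃ₜ ↥s) := by
  classical
  -- Step 1: recursively construct pairwise disjoint sets `B n ⊆ ℕ` and points `d n ∈ Y`
  -- with `d n ∈ hatSet (B n)`.
  have step : ∀ E : {E : Set ℕ // (Y ∩ hatSet E).Infinite},
      ∃ r : {E : Set ℕ // (Y ∩ hatSet E).Infinite} × Set ℕ × StoneCech ℕ,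
        (r.1 : Set ℕ) ⊆ (E : Set ℕ) ∧ r.2.1 ⊆ (E : Set ℕ) ∧ Disjoint (r.1 : Set ℕ) r.2.1 ∧
          r.2.2 ∈ Y ∧ r.2.2 ∈ hatSet r.2.1 := by
    rintro ⟨E, hE⟩
    obtain ⟨u, hu, v, hv, huv⟩ := hE.nontrivial
    obtain ⟨S, huS, hvS⟩ := hat_separation huv
    have hsplit : Y ∩ hatSet E = (Y ∩ hatSet (E ∩ S)) ∪ (Y ∩ hatSet (E ∩ Sᶜ)) := by
      rw [← inter_union_distrib_left, ← hatSet_union, ← inter_union_distrib_left,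
        union_compl_self, inter_univ]
    rw [hsplit] at hE
    have hdisj1 : Disjoint (E ∩ S) (E ∩ Sᶜ) :=
      Set.disjoint_left.mpr (fun a ha hb => hb.2 ha.2)
    rcases Set.infinite_union.mp hE with h | h
    · refine ⟨⟨⟨E ∩ S, h⟩, E ∩ Sᶜ, v⟩, inter_subset_left, inter_subset_left, hdisj1, hv.1, ?_⟩
      rw [hatSet_inter]
      exact ⟨hv.2, (hatSet_compl S) ▸ hvS⟩
    · refine ⟨⟨⟨E ∩ Sᶜ, h⟩, E ∩ S, u⟩, inter_subset_left, inter_subset_left, hdisj1.symm,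
        hu.1, ?_⟩
      rw [hatSet_inter]
      exact ⟨hu.2, huS⟩
  choose f hf1 hf2 hf3 hf4 hf5 using step
  have hbase : (Y ∩ hatSet (univ : Set ℕ)).Infinite := by rwa [hatSet_univ, inter_univ]
  set seq : ℕ → {E : Set ℕ // (Y ∩ hatSet E).Infinite} :=
    fun n => (fun E => (f E).1)^[n] ⟨univ, hbase⟩ with hseqdef
  have seq_succ : ∀ n, seq (n + 1) = (f (seq n)).1 := fun n =>
    Function.iterate_succ_apply' _ _ _
  set B : ℕ → Set ℕ := fun n => (f (seq n)).2.1 with hBdef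
  set d : ℕ → StoneCech ℕ := fun n => (f (seq n)).2.2 with hddef
  have hdY : ∀ n, d n ∈ Y := fun n => hf4 _
  have hdB : ∀ n, d n ∈ hatSet (B n) := fun n => hf5 _
  have hmono : ∀ n, (seq (n + 1) : Set ℕ) ⊆ (seq n : Set ℕ) := by
    intro n; rw [seq_succ]; exact hf1 _
  have hchain : ∀ n m, n ≤ m → (seq m : Set ℕ) ⊆ (seq n : Set ℕ) := by
    intro n m h
    induction h with
    | refl => exact subset_rfl
    | step h ih => exact _root_.trans (hmono _) ih
  have hBsub : ∀ n, B n ⊆ (seq n : Set ℕ) := fun n => hf2 _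
  have hdisjE : ∀ n, Disjoint ((seq (n + 1) : Set ℕ)) (B n) := by
    intro n; rw [seq_succ]; exact hf3 _
  have hBdisj : ∀ {m n}, m ≠ n → Disjoint (B m) (B n) := by
    have key : ∀ m n, n < m → Disjoint (B m) (B n) := by
      intro m n h
      exact Disjoint.mono_left (subset_trans (hBsub m) (hchain (n + 1) m h)) (hdisjE n)
    intro m n h
    rcases lt_or_gt_of_ne h with h' | h'
    · exact (key n m h').symm
    · exact key m n h'
  -- Step 2: the retraction map φ
  set idx : ℕ → ℕ := fun k => sInf {n | k ∈ B n} with hidxdef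
  have idx_eq : ∀ {k n}, k ∈ B n → idx k = n := by
    intro k n hk
    have hset : {m | k ∈ B m} = {n} := by
      ext m
      simp only [mem_setOf_eq, mem_singleton_iff]
      constructor
      · intro hm
        by_contra hne
        exact Set.disjoint_left.mp (hBdisj hne) hm hk
      · rintro rfl; exact hk
    rw [hidxdef]; simp [hset]
  have hcontf : Continuous (fun k : ℕ => stoneCechUnit (idx k)) := continuous_of_discreteTopology
  set φ : StoneCech ℕ → StoneCech ℕ := stoneCechExtend hcontf with hφdef
  have φcont : Continuous φ := continuous_stoneCechExtend hcontf
  have φunit : ∀ k, φ (stoneCechUnit k) = stoneCechUnit (idx k) := fun k =>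
    congrFun (stoneCechExtend_extends hcontf) k
  have φd : ∀ n, φ (d n) = stoneCechUnit n := by
    intro n
    have h1 : φ (d n) ∈ closure (φ '' (stoneCechUnit '' B n)) :=
      image_closure_subset_closure_image φcont ⟨d n, hdB n, rfl⟩
    have h2 : φ '' (stoneCechUnit '' B n) ⊆ {stoneCechUnit n} := by
      rintro _ ⟨_, ⟨k, hk, rfl⟩, rfl⟩
      simp [φunit, idx_eq hk]
    have h3 := closure_mono h2 h1
    rwa [closure_singleton, mem_singleton_iff] at h3
  -- Step 3: a cluster point of the sequence d
  obtain ⟨q, hqY, hq⟩ : ∃ q ∈ Y, ∀ W : Set (StoneCech ℕ), IsOpen W → q ∈ W →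
      ∀ N, ∃ n, N ≤ n ∧ d n ∈ W := by
    by_contra hno
    push_neg at hno
    set U : ℕ → Set ↥Y := fun N => Subtype.val ⁻¹' (closure (d '' Set.Ici N))ᶜ with hUdef
    have hUopen : ∀ N, IsOpen (U N) := fun N =>
      (isClosed_closure.isOpen_compl).preimage continuous_subtype_val
    have hUcover : (⋃ N, U N) = univ := by
      ext ⟨y, hy⟩
      simp only [mem_iUnion, mem_univ, iff_true]
      obtain ⟨W, hWo, hyW, N, hN⟩ := hno y hy
      refine ⟨N, ?_⟩
      simp only [hUdef, mem_preimage, mem_compl_iff]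
      intro hmem
      obtain ⟨z, hzW, m, hm, rfl⟩ := mem_closure_iff.mp hmem W hWo hyW
      exact hN m hm hzW
    obtain ⟨t, ht⟩ := hcc U hUopen hUcover
    set M := t.sup id with hM
    have hmem : (⟨d M, hdY M⟩ : ↥Y) ∈ ⋃ N ∈ t, U N := ht ▸ mem_univ _
    obtain ⟨N, hNt, hNU⟩ := mem_iUnion₂.mp hmem
    have hNM : N ≤ M := Finset.le_sup (f := id) hNt
    exact hNU (subset_closure ⟨M, hNM, rfl⟩)
  -- Step 4: the point p = φ q lies in ω*
  set p : StoneCech ℕ := φ q with hpdef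
  have hpnotunit : p ∉ Set.range (stoneCechUnit : ℕ → StoneCech ℕ) := by
    rintro ⟨m, hm⟩
    have hWopen : IsOpen (φ ⁻¹' hatSet {m}) := ((isClopen_hatSet _).2).preimage φcont
    have hqW : q ∈ φ ⁻¹' hatSet {m} := by
      rw [mem_preimage, ← hpdef, ← hm]
      exact mem_hatSet_unit.mpr rfl
    obtain ⟨n, hn, hdn⟩ := hq _ hWopen hqW (m + 1)
    rw [mem_preimage, φd] at hdn
    have hnm : n ∈ ({m} : Set ℕ) := mem_hatSet_unit.mp hdn
    rw [mem_singleton_iff] at hnm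
    omega
  have hpω : p ∈ omegaStar := hpnotunit
  -- Step 5: the copy s = range d ∪ {q}
  set s : Set (StoneCech ℕ) := range d ∪ {q} with hsdef
  have hssub : s ⊆ Y := by
    rintro x (⟨n, rfl⟩ | hx)
    · exact hdY n
    · rw [mem_singleton_iff] at hx; rw [hx]; exact hqY
  have hqs : q ∈ s := Or.inr rfl
  have hds : ∀ n, d n ∈ s := fun n => Or.inl ⟨n, rfl⟩
  have hmemP : ∀ x : ↥s, φ (x : StoneCech ℕ) ∈ omegaP p := by
    rintro ⟨x, hx | hx⟩
    · obtain ⟨n, rfl⟩ := hx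
      exact Or.inl ⟨n, (φd n).symm⟩
    · rw [mem_singleton_iff] at hx
      subst hx
      exact Or.inr rfl
  set e : ↥s → ↥(omegaP p) := fun x => ⟨φ (x : StoneCech ℕ), hmemP x⟩ with hedef
  have econt : Continuous e := Continuous.subtype_mk (φcont.comp continuous_subtype_val) _
  have einj : Function.Injective e := by
    rintro ⟨x, hx⟩ ⟨y, hy⟩ hxy
    have hval : φ x = φ y := congrArg Subtype.val hxy
    apply Subtype.ext
    show x = y
    rcases hx with ⟨n, rfl⟩ | hx <;> rcases hy with ⟨m, rfl⟩ | hy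
    · rw [φd, φd] at hval
      rw [stoneCechUnit_nat_injective hval]
    · rw [mem_singleton_iff] at hy; subst hy
      rw [φd, ← hpdef] at hval
      exact absurd ⟨n, hval⟩ hpnotunit
    · rw [mem_singleton_iff] at hx; subst hx
      rw [φd, ← hpdef] at hval
      exact absurd ⟨m, hval.symm⟩ hpnotunit
    · rw [mem_singleton_iff] at hx hy; rw [hx, hy]
  have esurj : Function.Surjective e := by
    rintro ⟨z, hz | hz⟩
    · obtain ⟨n, rfl⟩ := hz
      exact ⟨⟨d n, hds n⟩, Subtype.ext (φd n)⟩
    · rw [mem_singleton_iff] at hz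
      subst hz
      exact ⟨⟨q, hqs⟩, Subtype.ext rfl⟩
  set E : ↥s ≃ ↥(omegaP p) := Equiv.ofBijective e ⟨einj, esurj⟩ with hEdef
  -- Step 6: the inverse is continuous
  have hEsymm_cont : Continuous E.symm := by
    rw [continuous_iff_continuousAt]
    rintro ⟨z, hz⟩
    rcases hz' : hz with ⟨n, rfl⟩ | hz''
    · -- z is an isolated point
      have hopen : IsOpen ({⟨stoneCechUnit n, hz⟩} : Set ↥(omegaP p)) := by
        have heq : ({⟨stoneCechUnit n, hz⟩} : Set ↥(omegaP p))
            = Subtype.val ⁻¹' (hatSet {n}) := by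
          ext w
          simp only [mem_singleton_iff, mem_preimage, hatSet_singleton, Subtype.ext_iff]
        rw [heq]
        exact ((isClopen_hatSet _).2).preimage continuous_subtype_val
      have hnhds : 𝓝 (⟨stoneCechUnit n, hz⟩ : ↥(omegaP p)) = pure ⟨stoneCechUnit n, hz⟩ :=
        le_antisymm (le_pure_iff.mpr (hopen.mem_nhds rfl)) (pure_le_nhds _)
      unfold ContinuousAt
      rw [hnhds]
      exact tendsto_pure_nhds _ _
    · -- z = p
      rw [mem_singleton_iff] at hz''
      subst hz''
      have hEq : E.symm ⟨p, hz⟩ = ⟨q, hqs⟩ := by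
        rw [Equiv.symm_apply_eq]
        exact Subtype.ext rfl
      unfold ContinuousAt
      rw [hEq]
      have hcom : 𝓝 (⟨q, hqs⟩ : ↥s) = comap Subtype.val (𝓝 q) := nhds_subtype_eq_comap
      rw [hcom, tendsto_comap_iff]
      refine Filter.tendsto_def.mpr ?_
      intro W hW
      obtain ⟨V, hVnhds, hVclosed, hVW⟩ := exists_mem_nhds_isClosed_subset hW
      set W' := interior V with hW'def
      have hqW' : q ∈ W' := mem_interior_iff_mem_nhds.mpr hVnhds
      set A : Set ℕ := {n | d n ∈ W'} with hAdef
      have hclA : q ∈ closure (d '' A) := by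
        have hrange : q ∈ closure (range d) := by
          rw [mem_closure_iff]
          intro o ho hqo
          obtain ⟨n, -, hn⟩ := hq o ho hqo 0
          exact ⟨d n, hn, ⟨n, rfl⟩⟩
        have hsplit : range d ⊆ d '' A ∪ d '' Aᶜ := by
          rintro _ ⟨n, rfl⟩
          by_cases h : n ∈ A
          · exact Or.inl ⟨n, h, rfl⟩
          · exact Or.inr ⟨n, h, rfl⟩
        have h4 := closure_mono hsplit hrange
        rw [closure_union] at h4
        rcases h4 with h4 | h4
        · exact h4
        · exfalso
          have hsub2 : closure (d '' Aᶜ) ⊆ W'ᶜ := by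
            apply closure_minimal
            · rintro _ ⟨n, hn, rfl⟩; exact hn
            · exact isOpen_interior.isClosed_compl
          exact hsub2 h4 hqW'
      have hpA : p ∈ hatSet A := by
        have h1 : φ q ∈ closure (φ '' (d '' A)) :=
          image_closure_subset_closure_image φcont ⟨q, hclA, rfl⟩
        have h2 : φ '' (d '' A) ⊆ stoneCechUnit '' A := by
          rintro _ ⟨_, ⟨n, hn, rfl⟩, rfl⟩
          exact ⟨n, hn, (φd n).symm⟩
        rw [hpdef]
        exact closure_mono h2 h1
      refine Filter.mem_of_superset
        (show Subtype.val ⁻¹' hatSet A ∈ 𝓝 (⟨p, hz⟩ : ↥(omegaP p)) from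
          ((((isClopen_hatSet A).2).preimage continuous_subtype_val)).mem_nhds hpA) ?_
      rintro ⟨w, hw | hw⟩ hwA
      · obtain ⟨n, rfl⟩ := hw
        have hnA : n ∈ A := mem_hatSet_unit.mp hwA
        have hsymm : E.symm ⟨stoneCechUnit n, Or.inl ⟨n, rfl⟩⟩ = ⟨d n, hds n⟩ := by
          rw [Equiv.symm_apply_eq]
          exact Subtype.ext (φd n).symm
        show (E.symm ⟨stoneCechUnit n, _⟩ : StoneCech ℕ) ∈ W
        rw [hsymm]
        exact hVW (interior_subset hnA)
      · rw [mem_singleton_iff] at hw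
        subst hw
        show (E.symm ⟨p, _⟩ : StoneCech ℕ) ∈ W
        rw [hEq]
        exact hVW (interior_subset hqW')
  exact ⟨p, hpω, s, hssub, ⟨⟨E.symm, hEsymm_cont, econt⟩⟩⟩
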